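/- Let 𝒫 be a poset and let U, V ⊆ 𝒫 be such that U ∪ V = 𝒫. Let L : 𝒫 → vec be a persistence module such that L|_V is indecomposable, and such that L|_U admits a decomposition ⊕_{i∈I} X_i into indecomposables with X_i|_{U∩V} ≠ 0 for every i ∈ I. Then L is indecomposable. -/

import Mathlib

/-- A pointwise finite dimensional persistence module over a poset `P`, with coefficients in
the field `k`: a functor from `P` to finite dimensional `k`-vector spaces. -/
structure PersMod (k : Type) [Field k] (P : Type) [PartialOrder P] : Type 1 where
  carrier : P → Type
  [addCommGroup : ∀ x, AddCommGroup (carrier x)]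
  [module : ∀ x, Module k (carrier x)]
  [fd : ∀ x, FiniteDimensional k (carrier x)]
  map : ∀ {x y : P}, x ≤ y → (carrier x →ₗ[k] carrier y)
  map_id : ∀ x : P, map (le_refl x) = LinearMap.id
  map_comp : ∀ {x y z : P} (h₁ : x ≤ y) (h₂ : y ≤ z),
      map (h₁.trans h₂) = (map h₂).comp (map h₁)

attribute [instance] PersMod.addCommGroup PersMod.module PersMod.fd

namespace PersMod

section Core

variable {k : Type} [Field k] {P : Type} [PartialOrder P]

/-- A morphism of persistence modules (a natural transformation). -/
structure Hom (M N : PersMod k P) where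
  app : ∀ x, M.carrier x →ₗ[k] N.carrier x
  natural : ∀ {x y : P} (h : x ≤ y), (app y).comp (M.map h) = (N.map h).comp (app x)

theorem Hom.ext' {M N : PersMod k P} {f g : Hom M N} (h : ∀ x, f.app x = g.app x) :
    f = g := by
  cases f; cases g
  have : _ = _ := funext h
  subst this
  rfl

/-- Two persistence modules are isomorphic. -/
def Isom (M N : PersMod k P) : Prop :=
  ∃ (f : Hom M N) (g : Hom N M),
    (∀ x, (g.app x).comp (f.app x) = LinearMap.id) ∧
    (∀ x, (f.app x).comp (g.app x) = LinearMap.id)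

/-- The zero persistence module(s). -/
def IsZeroMod (M : PersMod k P) : Prop := ∀ x, Subsingleton (M.carrier x)

/-- The direct sum of two persistence modules. -/
def dsum (M N : PersMod k P) : PersMod k P where
  carrier x := M.carrier x × N.carrier x
  map h := (M.map h).prodMap (N.map h)
  map_id x := by
    refine LinearMap.ext fun v => ?_
    simp [M.map_id, N.map_id]
  map_comp h₁ h₂ := by
    refine LinearMap.ext fun v => ?_
    simp [M.map_comp h₁ h₂, N.map_comp h₁ h₂]

/-- A persistence module is indecomposable if it is nonzero and in any way of writing it as
a direct sum of two modules, one of the summands is zero. -/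
def Indecomposable (M : PersMod k P) : Prop :=
  ¬ IsZeroMod M ∧ ∀ A B : PersMod k P, Isom M (dsum A B) → IsZeroMod A ∨ IsZeroMod B

end Core

section Decomposition

variable {k : Type} [Field k] {P : Type} [PartialOrder P]

/-- The map between direct sums induced by a family of linear maps. -/
noncomputable def dsMap {ι : Type} {A B : ι → Type}
    [∀ i, AddCommGroup (A i)] [∀ i, Module k (A i)]
    [∀ i, AddCommGroup (B i)] [∀ i, Module k (B i)]
    (f : ∀ i, A i →ₗ[k] B i) : (DirectSum ι A) →ₗ[k] DirectSum ι B :=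
  letI := Classical.decEq ι
  DirectSum.toModule k ι _ (fun i => (DirectSum.lof k ι B i).comp (f i))

/-- `M` is (isomorphic to) the direct sum of the family of persistence modules `Ms`. -/
def IsDecomposition {ι : Type} (M : PersMod k P) (Ms : ι → PersMod k P) : Prop :=
  ∃ e : ∀ x : P, M.carrier x ≃ₗ[k] DirectSum ι (fun i => (Ms i).carrier x),
    ∀ (x y : P) (h : x ≤ y) (v : M.carrier x),
      e y (M.map h v) = dsMap (fun i => (Ms i).map h) (e x v)

end Decomposition

section Restriction

variable {k : Type} [Field k] {P : Type} [PartialOrder P]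

/-- Restriction of a persistence module to a full subposet. -/
def restrictMod (M : PersMod k P) (S : Set P) : PersMod k ↥S where
  carrier x := M.carrier x.1
  map {x y} h := M.map (Subtype.coe_le_coe.mpr h)
  map_id x := M.map_id x.1
  map_comp h₁ h₂ := M.map_comp _ _

end Restriction

end PersMod

open PersMod


namespace PersModAux
open PersMod

variable {k : Type} [Field k] {P : Type} [PartialOrder P]

def hcomp {M N O : PersMod k P} (f : Hom N O) (g : Hom M N) : Hom M O where
  app x := (f.app x).comp (g.app x)
  natural h := by
    rw [LinearMap.comp_assoc, g.natural h, ← LinearMap.comp_assoc, f.natural h,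
      LinearMap.comp_assoc]

@[simp] lemma hcomp_app {M N O : PersMod k P} (f : Hom N O) (g : Hom M N) (x : P) :
    (hcomp f g).app x = (f.app x).comp (g.app x) := rfl

def hid (M : PersMod k P) : Hom M M where
  app _ := LinearMap.id
  natural h := by simp

@[simp] lemma hid_app (M : PersMod k P) (x : P) : (hid M).app x = LinearMap.id := rfl

def hsub {M N : PersMod k P} (f g : Hom M N) : Hom M N where
  app x := f.app x - g.app x
  natural h := by
    rw [LinearMap.sub_comp, LinearMap.comp_sub, f.natural h, g.natural h]

@[simp] lemma hsub_app {M N : PersMod k P} (f g : Hom M N) (x : P) :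
    (hsub f g).app x = f.app x - g.app x := rfl

lemma exists_inv {M N : PersMod k P} (f : Hom M N) (hf : ∀ x, Function.Bijective (f.app x)) :
    ∃ g : Hom N M, (∀ x, (g.app x).comp (f.app x) = LinearMap.id) ∧
      (∀ x, (f.app x).comp (g.app x) = LinearMap.id) := by
  let e : ∀ x, M.carrier x ≃ₗ[k] N.carrier x := fun x => LinearEquiv.ofBijective (f.app x) (hf x)
  have he : ∀ x (v : M.carrier x), (e x).symm (f.app x v) = v := fun x v =>
    (e x).symm_apply_apply v
  have he' : ∀ x (w : N.carrier x), f.app x ((e x).symm w) = w := fun x w =>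
    (e x).apply_symm_apply w
  refine ⟨⟨fun x => (e x).symm.toLinearMap, ?_⟩, fun x => ?_, fun x => ?_⟩
  · intro x y h
    apply LinearMap.ext; intro w
    have := congrArg (fun (t : M.carrier x →ₗ[k] N.carrier y) => t ((e x).symm w)) (f.natural h)
    simp only [LinearMap.comp_apply] at this ⊢
    rw [he' x w] at this
    rw [← this]
    exact he y _
  · apply LinearMap.ext; intro v; simpa using he x v
  · apply LinearMap.ext; intro w; simpa using he' x w

section Fitting

variable {k : Type} [Field k] {Q : Type} [PartialOrder Q]

lemma nat_apply {X Y : PersMod k Q} (a : Hom X Y) {x y : Q} (h : x ≤ y) (v : X.carrier x) :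
    a.app y (X.map h v) = Y.map h (a.app x v) :=
  congrArg (fun t => t v) (a.natural h)

lemma nat_pow_apply {X : PersMod k Q} (a : Hom X X) {x y : Q} (h : x ≤ y) (n : ℕ)
    (v : X.carrier x) :
    ((a.app y)^n) (X.map h v) = X.map h (((a.app x)^n) v) := by
  induction n with
  | zero => simp
  | succ n ih =>
      rw [pow_succ', pow_succ']
      simp only [Module.End.mul_apply]
      rw [ih, nat_apply a h]

lemma dichotomy (X : PersMod k Q) (hX : X.Indecomposable) (a : Hom X X) :
    (∀ x, Function.Bijective (a.app x)) ∨
      (∀ x, Function.Bijective ((LinearMap.id : X.carrier x →ₗ[k] X.carrier x) - a.app x)) := by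
  classical
  set K : ∀ x, Submodule k (X.carrier x) := fun x => ⨆ n, LinearMap.ker ((a.app x)^n) with hK
  set I : ∀ x, Submodule k (X.carrier x) := fun x => ⨅ n, LinearMap.range ((a.app x)^n) with hI
  have hcompl : ∀ x, IsCompl (K x) (I x) := fun x =>
    LinearMap.isCompl_iSup_ker_pow_iInf_range_pow (a.app x)
  have hKmap : ∀ {x y : Q} (h : x ≤ y), ∀ v ∈ K x, X.map h v ∈ K y := by
    intro x y h v hv
    have hle : K x ≤ (K y).comap (X.map h) := by
      refine iSup_le fun n w hw => ?_
      simp only [Submodule.mem_comap]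
      refine Submodule.mem_iSup_of_mem n ?_
      rw [LinearMap.mem_ker] at hw ⊢
      rw [nat_pow_apply a h n w, hw, map_zero]
    exact hle hv
  have hImap : ∀ {x y : Q} (h : x ≤ y), ∀ v ∈ I x, X.map h v ∈ I y := by
    intro x y h v hv
    rw [Submodule.mem_iInf] at hv ⊢
    intro n
    obtain ⟨w, hw⟩ := hv n
    exact ⟨X.map h w, by rw [nat_pow_apply a h n w, hw]⟩
  let KM : PersMod k Q :=
    { carrier := fun x => ↥(K x)
      map := fun {x y} h =>
        ((X.map h).domRestrict (K x)).codRestrict (K y) (fun v => hKmap h v.1 v.2)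
      map_id := fun x => LinearMap.ext fun v => Subtype.ext (by
        show X.map (le_refl x) v.1 = v.1
        rw [X.map_id]; rfl)
      map_comp := fun {x y z} h₁ h₂ => LinearMap.ext fun v => Subtype.ext (by
        show X.map _ v.1 = X.map h₂ (X.map h₁ v.1)
        rw [X.map_comp h₁ h₂]; rfl) }
  let IM : PersMod k Q :=
    { carrier := fun x => ↥(I x)
      map := fun {x y} h =>
        ((X.map h).domRestrict (I x)).codRestrict (I y) (fun v => hImap h v.1 v.2)
      map_id := fun x => LinearMap.ext fun v => Subtype.ext (by
        show X.map (le_refl x) v.1 = v.1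
        rw [X.map_id]; rfl)
      map_comp := fun {x y z} h₁ h₂ => LinearMap.ext fun v => Subtype.ext (by
        show X.map _ v.1 = X.map h₂ (X.map h₁ v.1)
        rw [X.map_comp h₁ h₂]; rfl) }
  let e : ∀ x, (↥(K x) × ↥(I x)) ≃ₗ[k] X.carrier x := fun x =>
    Submodule.prodEquivOfIsCompl _ _ (hcompl x)
  have he : ∀ x (p : ↥(K x) × ↥(I x)), e x p = (p.1 : X.carrier x) + (p.2 : X.carrier x) :=
    fun x p => rfl
  have hiso : Isom X (dsum KM IM) := by
    refine ⟨⟨fun x => ((e x).symm : X.carrier x ≃ₗ[k] _).toLinearMap, ?_⟩,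
        ⟨fun x => (e x).toLinearMap, ?_⟩, fun x => ?_, fun x => ?_⟩
    · intro x y h
      apply LinearMap.ext; intro v
      obtain ⟨p, rfl⟩ := (e x).surjective v
      show (e y).symm (X.map h (e x p)) = ((dsum KM IM).map h) ((e x).symm (e x p))
      rw [LinearEquiv.symm_apply_apply]; refine (LinearEquiv.symm_apply_eq _).mpr ?_
      show X.map h ((p.1 : X.carrier x) + p.2) =
        ((KM.map h p.1 : X.carrier y) + (IM.map h p.2 : X.carrier y))
      rw [map_add]; rfl
    · intro x y h
      apply LinearMap.ext; intro p
      show ((KM.map h p.1 : X.carrier y) + (IM.map h p.2 : X.carrier y)) =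
        X.map h ((p.1 : X.carrier x) + p.2)
      rw [map_add]; rfl
    · exact LinearMap.ext fun v => (e x).apply_symm_apply v
    · exact LinearMap.ext fun p => (e x).symm_apply_apply p
  rcases hX.2 KM IM hiso with hz | hz
  · left
    intro x
    have hKbot : K x = ⊥ := by
      have : Subsingleton ↥(K x) := hz x
      exact Submodule.eq_bot_of_subsingleton
    have hinj : Function.Injective (a.app x) := by
      rw [← LinearMap.ker_eq_bot]
      rw [eq_bot_iff, ← hKbot]
      refine le_trans ?_ (le_iSup (fun n => LinearMap.ker ((a.app x)^n)) 1)
      rw [pow_one]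
    exact ⟨hinj, (LinearMap.injective_iff_surjective).mp hinj⟩
  · right
    intro x
    have hIbot : I x = ⊥ := by
      have : Subsingleton ↥(I x) := hz x
      exact Submodule.eq_bot_of_subsingleton
    obtain ⟨n, hn⟩ := Filter.eventually_atTop.mp ((a.app x).eventually_iInf_range_pow_eq)
    have hr : LinearMap.range ((a.app x)^n) = ⊥ := by
      rw [← hn n le_rfl]; exact hIbot
    have hnil : IsNilpotent (a.app x) := ⟨n, LinearMap.range_eq_bot.mp hr⟩
    have : IsUnit ((1 : Module.End k (X.carrier x)) - a.app x) := hnil.isUnit_one_sub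
    exact (Module.End.isUnit_iff _).mp this

end Fitting

section DSum

variable {k : Type} [Field k] {Q : Type} [PartialOrder Q] {ι : Type}

attribute [local instance] Classical.decEq

lemma dsMap_lof {A B : ι → Type}
    [∀ i, AddCommGroup (A i)] [∀ i, Module k (A i)]
    [∀ i, AddCommGroup (B i)] [∀ i, Module k (B i)]
    (f : ∀ i, A i →ₗ[k] B i) (i : ι) (v : A i) :
    dsMap (k := k) f (DirectSum.lof k ι A i v) = DirectSum.lof k ι B i (f i v) :=
  DirectSum.toModule_lof k i v

variable (Xs : ι → PersMod k Q)
  (hfd : ∀ x, FiniteDimensional k (DirectSum ι fun i => (Xs i).carrier x))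

noncomputable def DS : PersMod k Q where
  carrier x := DirectSum ι fun i => (Xs i).carrier x
  fd := hfd
  map {x y} h := dsMap fun i => (Xs i).map h
  map_id x := by
    refine DirectSum.linearMap_ext k fun i => ?_
    apply LinearMap.ext; intro v
    simp only [LinearMap.comp_apply, LinearMap.id_comp, LinearMap.id_apply]
    rw [dsMap_lof, (Xs i).map_id]
    rfl
  map_comp {x y z} h₁ h₂ := by
    refine DirectSum.linearMap_ext k fun i => ?_
    apply LinearMap.ext; intro v
    simp only [LinearMap.comp_apply]
    rw [dsMap_lof, dsMap_lof, dsMap_lof, (Xs i).map_comp h₁ h₂]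
    rfl

noncomputable def ιH (i : ι) : Hom (Xs i) (DS Xs hfd) where
  app x := DirectSum.lof k ι (fun j => (Xs j).carrier x) i
  natural {x y} h := by
    apply LinearMap.ext; intro v
    exact (dsMap_lof (fun j => (Xs j).map h) i v).symm

noncomputable def πH (i : ι) : Hom (DS Xs hfd) (Xs i) where
  app x := DirectSum.component k ι (fun j => (Xs j).carrier x) i
  natural {x y} h := by
    refine DirectSum.linearMap_ext k fun j => ?_
    apply LinearMap.ext; intro v
    show DirectSum.component k ι (fun l => (Xs l).carrier y) i
        (dsMap (fun l => (Xs l).map h) (DirectSum.lof k ι (fun l => (Xs l).carrier x) j v))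
      = (Xs i).map h (DirectSum.component k ι (fun l => (Xs l).carrier x) i
        (DirectSum.lof k ι (fun l => (Xs l).carrier x) j v))
    rw [dsMap_lof]
    by_cases hji : j = i
    · subst hji
      rw [DirectSum.component.lof_self, DirectSum.component.lof_self]
    · rw [DirectSum.component.of, DirectSum.component.of, dif_neg hji, dif_neg hji, map_zero]

lemma exchange (hind : ∀ i, (Xs i).Indecomposable) (x₀ : Q) (S : Finset ι)
    (f : Hom (DS Xs hfd) (DS Xs hfd)) (hf : hcomp f f = f)
    (hout : ∀ j ∉ S, ((πH Xs hfd j).app x₀).comp (f.app x₀) = 0)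
    (hne : f.app x₀ ≠ 0) :
    ∃ i, ∃ (u : Hom (Xs i) (DS Xs hfd)) (v : Hom (DS Xs hfd) (Xs i)),
      hcomp v (hcomp f u) = hid (Xs i) := by
  classical
  induction S using Finset.strongInduction generalizing f with
  | _ S ih =>
  have hfapp : ∀ x w, f.app x (f.app x w) = f.app x w := by
    intro x w
    have := congrArg (fun t => (Hom.app t x) w) hf
    simpa using this
  have hex : ∃ i ∈ S, ((πH Xs hfd i).app x₀).comp (f.app x₀) ≠ 0 := by
    by_contra hcon
    push_neg at hcon
    apply hne
    apply LinearMap.ext; intro w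
    refine DirectSum.ext_component k fun i => ?_
    rw [LinearMap.zero_apply]; refine Eq.trans ?_ (map_zero _).symm
    by_cases hi : i ∈ S
    · exact congrArg (fun t => t w) (hcon i hi)
    · exact congrArg (fun t => t w) (hout i hi)
  obtain ⟨i, hiS, _⟩ := hex
  set a : Hom (Xs i) (Xs i) := hcomp (πH Xs hfd i) (hcomp f (ιH Xs hfd i)) with ha
  rcases dichotomy (Xs i) (hind i) a with hbij | hbij
  · obtain ⟨s, hs1, _⟩ := exists_inv a hbij
    refine ⟨i, ιH Xs hfd i, hcomp s (πH Xs hfd i), ?_⟩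
    apply Hom.ext'; intro x
    apply LinearMap.ext; intro v
    have := congrArg (fun t => t v) (hs1 x)
    simp at this; exact this
  · have hsb : ∀ x, Function.Bijective ((hsub (hid (Xs i)) a).app x) := fun x => hbij x
    obtain ⟨s, _, hs2⟩ := exists_inv _ hsb
    set α : Hom (Xs i) (DS Xs hfd) := hcomp (hsub (hid _) f) (ιH Xs hfd i) with hα
    set Pm : Hom (DS Xs hfd) (DS Xs hfd) :=
      hsub (hid _) (hcomp α (hcomp s (πH Xs hfd i))) with hPm
    set g := hcomp Pm f with hg
    have hPapp : ∀ x (w : (DS Xs hfd).carrier x),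
        Pm.app x w = w - α.app x (s.app x ((πH Xs hfd i).app x w)) := fun x w => rfl
    have hfα : ∀ x (c : (Xs i).carrier x), f.app x (α.app x c) = 0 := by
      intro x c
      show f.app x (((LinearMap.id : (DS Xs hfd).carrier x →ₗ[k] (DS Xs hfd).carrier x) - f.app x) ((ιH Xs hfd i).app x c)) = 0
      simp only [LinearMap.sub_apply, LinearMap.id_apply, map_sub]
      rw [hfapp, sub_self]
    have hπα : ∀ x (c : (Xs i).carrier x),
        (πH Xs hfd i).app x (α.app x c) = ((LinearMap.id : (Xs i).carrier x →ₗ[k] (Xs i).carrier x) - a.app x) c := by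
      intro x c
      show (πH Xs hfd i).app x (((LinearMap.id : (DS Xs hfd).carrier x →ₗ[k] (DS Xs hfd).carrier x) - f.app x) ((ιH Xs hfd i).app x c)) = _
      simp only [LinearMap.sub_apply, LinearMap.id_apply, map_sub]
      congr 1
      exact DirectSum.component.lof_self (M := fun l => (Xs l).carrier x) k i c
    have hπP : ∀ x (w : (DS Xs hfd).carrier x),
        (πH Xs hfd i).app x (Pm.app x w) = 0 := by
      intro x w
      rw [hPapp, map_sub, hπα]
      have := congrArg (fun t => t ((πH Xs hfd i).app x w)) (hs2 x)
      simp only [LinearMap.comp_apply, LinearMap.id_apply, hsub_app, hid_app] at this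
      rw [this, sub_self]
    have hfP : ∀ x (w : (DS Xs hfd).carrier x),
        f.app x (Pm.app x w) = f.app x w := by
      intro x w
      rw [hPapp, map_sub, hfα, sub_zero]
    have hgg : hcomp g g = g := by
      apply Hom.ext'; intro x
      apply LinearMap.ext; intro w
      show Pm.app x (f.app x (Pm.app x (f.app x w))) = Pm.app x (f.app x w)
      rw [hfP, hfapp]
    have hgout : ∀ j ∉ S.erase i, ((πH Xs hfd j).app x₀).comp (g.app x₀) = 0 := by
      intro j hj
      apply LinearMap.ext; intro w
      simp only [LinearMap.comp_apply, LinearMap.zero_apply]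
      by_cases hji : j = i
      · subst hji
        exact hπP x₀ (f.app x₀ w)
      · have hjS : j ∉ S := fun hmem => hj (Finset.mem_erase.mpr ⟨hji, hmem⟩)
        have hπjf : ∀ w', (πH Xs hfd j).app x₀ (f.app x₀ w') = 0 := by
          intro w'
          have := congrArg (fun t => t w') (hout j hjS)
          simpa using this
        show (πH Xs hfd j).app x₀ (Pm.app x₀ (f.app x₀ w)) = 0
        rw [hPapp, map_sub, hπjf]
        have hπjα : ∀ c, (πH Xs hfd j).app x₀ (α.app x₀ c) = 0 := by
          intro c
          show (πH Xs hfd j).app x₀ (((LinearMap.id : (DS Xs hfd).carrier x₀ →ₗ[k] (DS Xs hfd).carrier x₀) - f.app x₀) ((ιH Xs hfd i).app x₀ c)) = 0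
          simp only [LinearMap.sub_apply, LinearMap.id_apply, map_sub]
          rw [hπjf]
          show DirectSum.component k ι (fun l => (Xs l).carrier x₀) j
            (DirectSum.lof k ι (fun l => (Xs l).carrier x₀) i c) - 0 = 0
          rw [DirectSum.component.of, dif_neg (fun h => hji h.symm), sub_zero]
        rw [hπjα, zero_sub, neg_zero]
    have hgne : g.app x₀ ≠ 0 := by
      intro h0
      apply hne
      apply LinearMap.ext; intro w
      simp only [LinearMap.zero_apply]
      have hP0 : Pm.app x₀ (f.app x₀ w) = 0 := by
        have := congrArg (fun t => t w) h0
        simp at this; exact this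
      have hfw : f.app x₀ w =
          α.app x₀ (s.app x₀ ((πH Xs hfd i).app x₀ (f.app x₀ w))) := by
        rw [hPapp] at hP0
        exact sub_eq_zero.mp hP0
      have h1 : f.app x₀ (f.app x₀ w) = 0 := by
        conv_lhs => rw [hfw]
        exact hfα _ _
      rw [hfapp] at h1
      exact h1
    obtain ⟨j, u, v, huv⟩ := ih (S.erase i) (Finset.erase_ssubset hiS) g hgg hgout hgne
    refine ⟨j, u, hcomp v Pm, ?_⟩
    apply Hom.ext'; intro x
    apply LinearMap.ext; intro c
    have := congrArg (fun t => (Hom.app t x) c) huv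
    simp at this; exact this

end DSum

section Glue

variable {k : Type} [Field k] {P : Type} [PartialOrder P]

def restrictHom {M N : PersMod k P} (f : Hom M N) (S : Set P) :
    Hom (restrictMod M S) (restrictMod N S) where
  app x := f.app x.1
  natural {x y} h := f.natural _

def fstH (A B : PersMod k P) : Hom (dsum A B) A where
  app x := LinearMap.fst k _ _
  natural {x y} h := by apply LinearMap.ext; intro v; rfl

def sndH (A B : PersMod k P) : Hom (dsum A B) B where
  app x := LinearMap.snd k _ _
  natural {x y} h := by apply LinearMap.ext; intro v; rfl

def inlH (A B : PersMod k P) : Hom A (dsum A B) where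
  app x := LinearMap.inl k _ _
  natural {x y} h := by
    apply LinearMap.ext; intro v
    show ((A.map h v, 0) : A.carrier y × B.carrier y) = ((A.map h).prodMap (B.map h)) (v, 0)
    simp

def inrH (A B : PersMod k P) : Hom B (dsum A B) where
  app x := LinearMap.inr k _ _
  natural {x y} h := by
    apply LinearMap.ext; intro v
    show (((0 : A.carrier y), B.map h v) : A.carrier y × B.carrier y) = ((A.map h).prodMap (B.map h)) (0, v)
    simp

lemma summand_trivial
    (U V : Set P) (hUV : U ∪ V = Set.univ) (L : PersMod k P)
    {ι : Type} (Xs : ι → PersMod k ↥U)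
    (hdec : IsDecomposition (restrictMod L U) Xs)
    (hind : ∀ i, (Xs i).Indecomposable)
    (hnz : ∀ i, ¬ IsZeroMod (restrictMod (Xs i) {x : ↥U | (x : P) ∈ V}))
    (C : PersMod k P) (jC : Hom C L) (pC : Hom L C)
    (hpj : ∀ x (c : C.carrier x), pC.app x (jC.app x c) = c)
    (hCV : ∀ x : P, x ∈ V → Subsingleton (C.carrier x)) :
    IsZeroMod C := by
  classical
  obtain ⟨e, he⟩ := hdec
  have hfd : ∀ x : ↥U, FiniteDimensional k (DirectSum ι fun i => (Xs i).carrier x) :=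
    fun x => (e x).finiteDimensional
  let Φ : Hom (restrictMod L U) (DS Xs hfd) :=
    { app := fun x => (e x).toLinearMap
      natural := fun {x y} h => by
        apply LinearMap.ext; intro v
        exact he x y h v }
  obtain ⟨Ψ, hΨΦ, hΦΨ⟩ := exists_inv Φ (fun x => (e x).bijective)
  have hΨΦ' : ∀ x z, Ψ.app x (Φ.app x z) = z := by
    intro x z
    have := congrArg (fun t => t z) (hΨΦ x)
    simpa using this
  have hΦΨ' : ∀ x z, Φ.app x (Ψ.app x z) = z := by
    intro x z
    have := congrArg (fun t => t z) (hΦΨ x)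
    simpa using this
  set E : Hom L L := hcomp jC pC with hE
  have hEapp : ∀ x w, E.app x w = jC.app x (pC.app x w) := fun x w => rfl
  set F : Hom (DS Xs hfd) (DS Xs hfd) :=
    hcomp Φ (hcomp (restrictHom E U) Ψ) with hF
  have hFapp : ∀ (x : ↥U) w, F.app x w = Φ.app x (E.app x.1 (Ψ.app x w)) := fun x w => rfl
  have hFF : hcomp F F = F := by
    apply Hom.ext'; intro x
    apply LinearMap.ext; intro w
    show F.app x (F.app x w) = F.app x w
    have hEE : ∀ x y, E.app x (E.app x y) = E.app x y := fun x y => by rw [hEapp, hEapp, hpj]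
    exact congrArg (Φ.app x) ((congrArg (E.app x.1) (hΨΦ' x _)).trans (hEE x.1 _))
  intro x₀p
  by_contra hC
  have hx0 : x₀p ∈ U := by
    have hmem : x₀p ∈ U ∪ V := by rw [hUV]; trivial
    rcases hmem with h | h
    · exact h
    · exact absurd (hCV x₀p h) hC
  set x₀ : ↥U := (⟨x₀p, hx0⟩ : ↥U) with hx₀
  have hEne : E.app x₀p ≠ 0 := by
    intro h0
    apply hC
    refine ⟨fun a b => ?_⟩
    have key : ∀ c : C.carrier x₀p, c = 0 := by
      intro c
      have h1 : pC.app x₀p (E.app x₀p (jC.app x₀p c)) = c := by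
        rw [hEapp, hpj, hpj]
      rw [h0] at h1
      simpa using h1.symm
    rw [key a, key b]
  have hFne : F.app x₀ ≠ 0 := by
    intro h0
    apply hEne
    apply LinearMap.ext; intro w
    simp only [LinearMap.zero_apply]
    have h1 : E.app x₀p w = Ψ.app x₀ (F.app x₀ (Φ.app x₀ w)) := by
      rw [hFapp]
      exact (hΨΦ' x₀ _).symm.trans (congrArg (fun t => Ψ.app x₀ (Φ.app x₀ (E.app x₀p t))) (hΨΦ' x₀ w)).symm
    rw [h0] at h1
    simp at h1; exact h1
  obtain ⟨sgen, hsgen⟩ := IsNoetherian.noetherian (LinearMap.range (F.app x₀))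
  set S : Finset ι := sgen.biUnion (fun w => DFinsupp.support w) with hS
  have hout : ∀ j ∉ S, ((πH Xs hfd j).app x₀).comp (F.app x₀) = 0 := by
    intro j hj
    apply LinearMap.ext; intro w
    simp only [LinearMap.comp_apply, LinearMap.zero_apply]
    have hmem : F.app x₀ w ∈
        Submodule.span k (↑sgen : Set ((DS Xs hfd).carrier x₀)) := by
      rw [hsgen]; exact LinearMap.mem_range_self _ w
    have hle : Submodule.span k (↑sgen : Set ((DS Xs hfd).carrier x₀)) ≤
        LinearMap.ker ((πH Xs hfd j).app x₀) := by
      rw [Submodule.span_le]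
      intro w' hw'
      rw [SetLike.mem_coe, LinearMap.mem_ker]
      have hns : j ∉ DFinsupp.support w' := fun hjw =>
        hj (Finset.mem_biUnion.mpr ⟨w', hw', hjw⟩)
      exact DFinsupp.notMem_support_iff.mp hns
    exact LinearMap.mem_ker.mp (hle hmem)
  obtain ⟨i, u, v, huv⟩ := exchange Xs hfd hind x₀ S F hFF hout hFne
  refine absurd ?_ (hnz i)
  intro w
  have hsubC : Subsingleton (C.carrier (w.1 : P)) := hCV _ w.2
  have hFw : F.app w.1 = 0 := by
    apply LinearMap.ext; intro z
    simp only [LinearMap.zero_apply]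
    rw [hFapp]; show Φ.app w.1 (jC.app (w.1 : P) (pC.app (w.1 : P) (Ψ.app w.1 z))) = 0
    have h0 : pC.app (w.1 : P) (Ψ.app w.1 z) = 0 := Subsingleton.elim _ _
    rw [h0, map_zero]; exact map_zero (Φ.app w.1)
  have hzero : ∀ c : (Xs i).carrier w.1, c = 0 := by
    intro c
    have := congrArg (fun t => (Hom.app t w.1) c) huv
    simp only [hcomp_app, hid_app, LinearMap.comp_apply, LinearMap.id_apply] at this
    rw [hFw] at this
    simpa using this.symm
  exact ⟨fun a b => by rw [hzero a, hzero b]⟩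

end Glue

end PersModAux
open PersModAux in
/-- Gluing indecomposability: if `L|_V` is indecomposable and every indecomposable summand
of `L|_U` is nonzero on `U ∩ V`, then `L` is indecomposable. -/
theorem gluing_indecomposable (k : Type) [Field k] (P : Type) [PartialOrder P]
    (U V : Set P) (hUV : U ∪ V = Set.univ)
    (L : PersMod k P)
    (hLV : (restrictMod L V).Indecomposable)
    (ι : Type) (Xs : ι → PersMod k ↥U)
    (hdec : IsDecomposition (restrictMod L U) Xs)
    (hind : ∀ i, (Xs i).Indecomposable)
    (hnz : ∀ i, ¬ IsZeroMod (restrictMod (Xs i) {x : ↥U | (x : P) ∈ V})) :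
    L.Indecomposable := by
  constructor
  · intro h
    exact hLV.1 (fun x => h x.1)
  · intro A B hiso
    obtain ⟨f, g, hgf, hfg⟩ := hiso
    have hfg' : ∀ x z, f.app x (g.app x z) = z := by
      intro x z
      have := congrArg (fun t => t z) (hfg x); simpa using this
    have hisoV : Isom (restrictMod L V) (dsum (restrictMod A V) (restrictMod B V)) :=
      ⟨restrictHom f V, restrictHom g V, fun x => hgf x.1, fun x => hfg x.1⟩
    rcases hLV.2 _ _ hisoV with hz | hz
    · left
      refine summand_trivial U V hUV L Xs hdec hind hnz A
        (hcomp g (inlH A B)) (hcomp (fstH A B) f) ?_ (fun x hx => hz ⟨x, hx⟩)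
      intro x c
      show (fstH A B).app x (f.app x (g.app x ((inlH A B).app x c))) = c
      rw [hfg']
      rfl
    · right
      refine summand_trivial U V hUV L Xs hdec hind hnz B
        (hcomp g (inrH A B)) (hcomp (sndH A B) f) ?_ (fun x hx => hz ⟨x, hx⟩)
      intro x c
      show (sndH A B).app x (f.app x (g.app x ((inrH A B).app x c))) = c
      rw [hfg']
      rfl
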